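/- For every real q > 1 and all positive definite operators ρ and σ on a finite-dimensional complex Hilbert space, Tr[σ^{1/2}(σ^{−1/2} ρ σ^{−1/2})^q σ^{1/2}] = Tr[ρ^{1/2}(ρ^{1/2} σ⁻¹ ρ^{1/2})^{q−1} ρ^{1/2}]. -/

import Mathlib

open scoped Kronecker ComplexOrder

namespace QIT

variable {n : Type*} [Fintype n] [DecidableEq n]

/-- Operator norm of a matrix, i.e. the norm of the induced operator on Euclidean space. -/
noncomputable def opNorm (M : Matrix n n ℂ) : ℝ :=
  ‖Matrix.toEuclideanCLM (𝕜 := ℂ) M‖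

/-- Functional calculus for Hermitian matrices (junk value `0` on non-Hermitian inputs). -/
noncomputable def matCfc (f : ℝ → ℝ) (M : Matrix n n ℂ) : Matrix n n ℂ :=
  if hM : M.IsHermitian then
    (hM.eigenvectorUnitary : Matrix n n ℂ) *
      Matrix.diagonal (fun i => (f (hM.eigenvalues i) : ℂ)) *
      star (hM.eigenvectorUnitary : Matrix n n ℂ)
  else 0

/-- Matrix logarithm via the functional calculus. -/
noncomputable def mlog (M : Matrix n n ℂ) : Matrix n n ℂ := matCfc Real.log M

/-- Real powers of a matrix via the functional calculus. -/
noncomputable def mpow (M : Matrix n n ℂ) (q : ℝ) : Matrix n n ℂ :=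
  matCfc (fun x => x ^ q) M

/-- Umegaki relative entropy `D(ρ‖σ) = Tr[ρ (log ρ - log σ)]`. -/
noncomputable def relEntropy (ρ σ : Matrix n n ℂ) : ℝ :=
  (Matrix.trace (ρ * (mlog ρ - mlog σ))).re

/-- Belavkin-Staszewski relative entropy `D̂(ρ‖σ) = Tr[ρ log (ρ^{1/2} σ⁻¹ ρ^{1/2})]`. -/
noncomputable def bsEntropy (ρ σ : Matrix n n ℂ) : ℝ :=
  (Matrix.trace (ρ * mlog (mpow ρ (1/2) * σ⁻¹ * mpow ρ (1/2)))).re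

/-- `q`-geometric Rényi divergence
`D̂_q(ρ‖σ) = (q-1)⁻¹ log Tr[σ^{1/2} (σ^{-1/2} ρ σ^{-1/2})^q σ^{1/2}]`. -/
noncomputable def geomRenyi (q : ℝ) (ρ σ : Matrix n n ℂ) : ℝ :=
  (q - 1)⁻¹ *
    Real.log
      (Matrix.trace
        (mpow σ (1/2) * mpow (mpow σ (-(1/2)) * ρ * mpow σ (-(1/2))) q * mpow σ (1/2))).re

/-- Trace norm `‖M‖₁ = Tr ((M† M)^{1/2})`. -/
noncomputable def traceNorm (M : Matrix n n ℂ) : ℝ :=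
  (((Matrix.posSemidef_conjTranspose_mul_self M).1.eigenvectorUnitary : Matrix n n ℂ) *
      Matrix.diagonal (fun i => ((Real.sqrt ((Matrix.posSemidef_conjTranspose_mul_self M).1.eigenvalues i) : ℝ) : ℂ)) *
      (star (Matrix.posSemidef_conjTranspose_mul_self M).1.eigenvectorUnitary : Matrix n n ℂ)).trace.re

/-- Partial trace over the second tensor factor. -/
noncomputable def ptraceRight {a c : Type*} [Fintype a] [Fintype c]
    (M : Matrix (a × c) (a × c) ℂ) : Matrix a a ℂ :=
  fun i j => ∑ k, M (i, k) (j, k)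

/-- Partial trace over the first tensor factor. -/
noncomputable def ptraceLeft {a c : Type*} [Fintype a] [Fintype c]
    (M : Matrix (a × c) (a × c) ℂ) : Matrix c c ℂ :=
  fun i j => ∑ k, M (k, i) (k, j)


open Matrix

section Auxiliary

variable {n : Type*} [Fintype n] [DecidableEq n]

lemma matCfc_eq {M : Matrix n n ℂ} (hM : M.IsHermitian) (f : ℝ → ℝ) :
    matCfc f M = cfc f M := by
  rw [hM.cfc_eq, matCfc, dif_pos hM]
  rfl

lemma mpow_eq {M : Matrix n n ℂ} (hM : M.IsHermitian) (q : ℝ) :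
    mpow M q = cfc (fun x : ℝ => x ^ q) M := matCfc_eq hM _

lemma spec_pos {M : Matrix n n ℂ} (hM : M.PosDef) : ∀ x ∈ spectrum ℝ M, 0 < x := by
  intro x hx
  rw [hM.isHermitian.spectrum_real_eq_range_eigenvalues] at hx
  obtain ⟨i, rfl⟩ := hx
  exact hM.eigenvalues_pos i

lemma mpow_isHermitian {M : Matrix n n ℂ} (hM : M.IsHermitian) (q : ℝ) :
    (mpow M q).IsHermitian := by
  rw [mpow_eq hM]
  exact cfc_predicate _ _

lemma mpow_mul_mpow {M : Matrix n n ℂ} (hM : M.PosDef) (a b : ℝ) :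
    mpow M a * mpow M b = mpow M (a + b) := by
  rw [mpow_eq hM.isHermitian, mpow_eq hM.isHermitian, mpow_eq hM.isHermitian,
    ← cfc_mul _ _ M ((Matrix.finite_real_spectrum (A := M)).continuousOn _)
      ((Matrix.finite_real_spectrum (A := M)).continuousOn _)]
  exact cfc_congr fun x hx => (Real.rpow_add (spec_pos hM x hx) a b).symm

lemma mpow_one' {M : Matrix n n ℂ} (hM : M.PosDef) : mpow M 1 = M := by
  rw [mpow_eq hM.isHermitian]
  calc cfc (fun x : ℝ => x ^ (1:ℝ)) M = cfc (id : ℝ → ℝ) M :=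
        cfc_congr fun x _ => Real.rpow_one x
    _ = M := cfc_id ℝ M hM.isHermitian

lemma mpow_zero' {M : Matrix n n ℂ} (hM : M.PosDef) : mpow M 0 = 1 := by
  rw [mpow_eq hM.isHermitian]
  calc cfc (fun x : ℝ => x ^ (0:ℝ)) M = cfc (fun _ : ℝ => 1) M :=
        cfc_congr fun x _ => Real.rpow_zero x
    _ = 1 := cfc_const_one ℝ M hM.isHermitian

lemma mpow_mul_base {M : Matrix n n ℂ} (hM : M.PosDef) (a : ℝ) :
    mpow M a * M = mpow M (a + 1) := by
  have h := mpow_mul_mpow hM a 1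
  rwa [mpow_one' hM] at h

lemma base_mul_mpow {M : Matrix n n ℂ} (hM : M.PosDef) (a : ℝ) :
    M * mpow M a = mpow M (1 + a) := by
  have h := mpow_mul_mpow hM 1 a
  rwa [mpow_one' hM] at h

/-- Conjugation by a unitary matrix as a star algebra homomorphism. -/
noncomputable def conjHom (U : Matrix n n ℂ) (hU : Uᴴ * U = 1) :
    Matrix n n ℂ →⋆ₐ[ℂ] Matrix n n ℂ where
  toFun a := U * a * Uᴴ
  map_one' := by
    show U * 1 * Uᴴ = 1
    rw [mul_one]; exact mul_eq_one_comm.mp hU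
  map_mul' a b := by
    simp only [← mul_assoc]
    rw [mul_assoc (U * a) Uᴴ U, hU, mul_one]
  map_zero' := by simp
  map_add' a b := by simp [Matrix.add_mul, Matrix.mul_add]
  commutes' c := by
    simp only [Algebra.algebraMap_eq_smul_one, Matrix.smul_mul, Matrix.mul_smul, mul_one]
    rw [mul_eq_one_comm.mp hU]
  map_star' a := by
    show U * star a * Uᴴ = star (U * a * Uᴴ)
    simp only [StarMul.star_mul, star_star, mul_assoc, Matrix.star_eq_conjTranspose,
      Matrix.conjTranspose_conjTranspose]

lemma cfc_unitary_conj {U : Matrix n n ℂ} (hU : Uᴴ * U = 1) {B : Matrix n n ℂ}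
    (hB : B.IsHermitian) (f : ℝ → ℝ) :
    cfc f (U * B * Uᴴ) = U * cfc f B * Uᴴ := by
  have hcont : Continuous (conjHom U hU) := by
    show Continuous fun a : Matrix n n ℂ => U * a * Uᴴ
    exact (continuous_const.matrix_mul continuous_id).matrix_mul continuous_const
  have hconj : (U * B * Uᴴ).IsHermitian := by
    have := Matrix.isHermitian_mul_mul_conjTranspose U (A := B) hB
    simpa using this
  exact (StarAlgHomClass.map_cfc (conjHom U hU) f B
    ((Matrix.finite_real_spectrum (A := B)).continuousOn f) hcont hB hconj).symm

lemma posDef_conjTranspose_mul_self' {X : Matrix n n ℂ} (hX : IsUnit X) :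
    (Xᴴ * X).PosDef := by
  exact (Matrix.posSemidef_conjTranspose_mul_self X).posDef_iff_isUnit.mpr (hX.star.mul hX)

end Auxiliary

/-- For every real `q > 1` and positive definite `ρ`, `σ`:
`Tr[σ^{1/2} (σ^{-1/2} ρ σ^{-1/2})^q σ^{1/2}] = Tr[ρ^{1/2} (ρ^{1/2} σ⁻¹ ρ^{1/2})^{q-1} ρ^{1/2}]`. -/
theorem trace_geom_renyi_flip {n : Type*} [Fintype n] [DecidableEq n]
    (q : ℝ) (hq : 1 < q) (ρ σ : Matrix n n ℂ) (hρ : ρ.PosDef) (hσ : σ.PosDef) :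
    Matrix.trace
        (mpow σ (1/2) * mpow (mpow σ (-(1/2)) * ρ * mpow σ (-(1/2))) q * mpow σ (1/2)) =
      Matrix.trace
        (mpow ρ (1/2) * mpow (mpow ρ (1/2) * σ⁻¹ * mpow ρ (1/2)) (q - 1) * mpow ρ (1/2)) := by
  classical
  have hρH := hρ.isHermitian
  have hσH := hσ.isHermitian
  have hR : (mpow ρ (1/2)).IsHermitian := mpow_isHermitian hρH _
  have hSi : (mpow σ (-(1/2))).IsHermitian := mpow_isHermitian hσH _
  have hRu : IsUnit (mpow ρ (1/2)) := by
    have h1 : mpow ρ (1/2) * mpow ρ (-(1/2)) = 1 := by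
      rw [mpow_mul_mpow hρ, show (1/2 + -(1/2) : ℝ) = 0 by ring, mpow_zero' hρ]
    exact ⟨⟨_, _, h1, mul_eq_one_comm.mp h1⟩, rfl⟩
  have hSiu : IsUnit (mpow σ (-(1/2))) := by
    have h1 : mpow σ (-(1/2)) * mpow σ (1/2) = 1 := by
      rw [mpow_mul_mpow hσ, show (-(1/2) + 1/2 : ℝ) = 0 by ring, mpow_zero' hσ]
    exact ⟨⟨_, _, h1, mul_eq_one_comm.mp h1⟩, rfl⟩
  set X := mpow σ (-(1/2)) * mpow ρ (1/2) with hXdef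
  have hXu : IsUnit X := hSiu.mul hRu
  have hXH : Xᴴ = mpow ρ (1/2) * mpow σ (-(1/2)) := by
    rw [hXdef, Matrix.conjTranspose_mul, hR, hSi]
  set B := mpow ρ (1/2) * σ⁻¹ * mpow ρ (1/2) with hBdef
  have hBX : B = Xᴴ * X := by
    rw [hBdef, hXH, hXdef]
    have hinvσ : σ⁻¹ = mpow σ (-(1/2)) * mpow σ (-(1/2)) := by
      have h1 : mpow σ (-(1/2)) * mpow σ (-(1/2)) * σ = 1 := by
        rw [mpow_mul_mpow hσ, mpow_mul_base hσ,
          show (-(1/2) + -(1/2) + 1 : ℝ) = 0 by ring, mpow_zero' hσ]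
      exact Matrix.inv_eq_left_inv h1
    rw [hinvσ]
    simp only [mul_assoc]
  have hB : B.PosDef := by
    rw [hBX]; exact posDef_conjTranspose_mul_self' hXu
  have hA : mpow σ (-(1/2)) * ρ * mpow σ (-(1/2)) = X * Xᴴ := by
    rw [hXH, hXdef]
    have hρsq : ρ = mpow ρ (1/2) * mpow ρ (1/2) := by
      rw [mpow_mul_mpow hρ, show (1/2 + 1/2 : ℝ) = 1 by norm_num, mpow_one' hρ]
    conv_lhs => rw [hρsq]
    simp only [mul_assoc]
  have hBn : (mpow B (-(1/2))).IsHermitian := mpow_isHermitian hB.isHermitian _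
  set U := X * mpow B (-(1/2)) with hUdef
  have hUH : Uᴴ = mpow B (-(1/2)) * Xᴴ := by
    rw [hUdef, Matrix.conjTranspose_mul, hBn]
  have hBnBBn : mpow B (-(1/2)) * B * mpow B (-(1/2)) = 1 := by
    rw [mpow_mul_base hB, mpow_mul_mpow hB, show (-(1/2) + 1 + -(1/2) : ℝ) = 0 by ring,
      mpow_zero' hB]
  have hUunit : Uᴴ * U = 1 := by
    have h1 : Uᴴ * U = mpow B (-(1/2)) * (Xᴴ * X) * mpow B (-(1/2)) := by
      rw [hUH, hUdef]; simp only [mul_assoc]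
    rw [h1, ← hBX, hBnBBn]
  have hAU : mpow σ (-(1/2)) * ρ * mpow σ (-(1/2)) = U * B * Uᴴ := by
    rw [hA, hUdef, hUH]
    have h1 : X * mpow B (-(1/2)) * B * (mpow B (-(1/2)) * Xᴴ)
        = X * (mpow B (-(1/2)) * B * mpow B (-(1/2))) * Xᴴ := by
      simp only [mul_assoc]
    rw [h1, hBnBBn, mul_one]
  have hkey : mpow (mpow σ (-(1/2)) * ρ * mpow σ (-(1/2))) q = U * mpow B q * Uᴴ := by
    have hABH : (U * B * Uᴴ).IsHermitian := by
      rw [← hAU, hA]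
      exact (Matrix.posSemidef_self_mul_conjTranspose X).1
    rw [hAU, mpow_eq hABH, cfc_unitary_conj hUunit hB.isHermitian, ← mpow_eq hB.isHermitian]
  -- σ^{-1/2} σ σ^{-1/2} = 1
  have hSiσSi : mpow σ (-(1/2)) * σ * mpow σ (-(1/2)) = 1 := by
    rw [mpow_mul_base hσ, mpow_mul_mpow hσ, show (-(1/2) + 1 + -(1/2) : ℝ) = 0 by ring,
      mpow_zero' hσ]
  have hXsX : Xᴴ * σ * X = ρ := by
    rw [hXH, hXdef]
    have h1 : mpow ρ (1/2) * mpow σ (-(1/2)) * σ * (mpow σ (-(1/2)) * mpow ρ (1/2))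
        = mpow ρ (1/2) * (mpow σ (-(1/2)) * σ * mpow σ (-(1/2))) * mpow ρ (1/2) := by
      simp only [mul_assoc]
    rw [h1, hSiσSi, mul_one, mpow_mul_mpow hρ, show (1/2 + 1/2 : ℝ) = 1 by norm_num,
      mpow_one' hρ]
  have hUσU : Uᴴ * σ * U = mpow B (-(1/2)) * ρ * mpow B (-(1/2)) := by
    rw [hUH, hUdef]
    have h1 : mpow B (-(1/2)) * Xᴴ * σ * (X * mpow B (-(1/2)))
        = mpow B (-(1/2)) * (Xᴴ * σ * X) * mpow B (-(1/2)) := by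
      simp only [mul_assoc]
    rw [h1, hXsX]
  rw [hkey]
  calc
    Matrix.trace (mpow σ (1/2) * (U * mpow B q * Uᴴ) * mpow σ (1/2))
        = Matrix.trace (mpow σ (1/2) * mpow σ (1/2) * (U * mpow B q * Uᴴ)) :=
      Matrix.trace_mul_cycle _ _ _
    _ = Matrix.trace (σ * U * mpow B q * Uᴴ) := by
      rw [mpow_mul_mpow hσ, show (1/2 + 1/2 : ℝ) = 1 by norm_num, mpow_one' hσ]
      simp only [mul_assoc]
    _ = Matrix.trace (Uᴴ * σ * U * mpow B q) := by
      rw [Matrix.trace_mul_cycle]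
      simp only [mul_assoc]
    _ = Matrix.trace (mpow B (-(1/2)) * ρ * mpow B (-(1/2)) * mpow B q) := by rw [hUσU]
    _ = Matrix.trace (mpow B (-(1/2)) * mpow B q * mpow B (-(1/2)) * ρ) := by
      rw [show mpow B (-(1/2)) * ρ * mpow B (-(1/2)) * mpow B q
          = (mpow B (-(1/2)) * ρ) * (mpow B (-(1/2)) * mpow B q) by simp only [mul_assoc],
        Matrix.trace_mul_comm]
      simp only [mul_assoc]
    _ = Matrix.trace (mpow B (q - 1) * ρ) := by
      rw [mpow_mul_mpow hB, mpow_mul_mpow hB,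
        show (-(1/2) + q + -(1/2) : ℝ) = q - 1 by ring]
    _ = Matrix.trace (mpow ρ (1/2) * mpow B (q - 1) * mpow ρ (1/2)) := by
      rw [Matrix.trace_mul_cycle, mpow_mul_mpow hρ, show (1/2 + 1/2 : ℝ) = 1 by norm_num,
        mpow_one' hρ, Matrix.trace_mul_comm]


end QIT
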